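/- For every real number a with 0 < a < 1 and every natural number Q, ∑_{q=0}^{Q−1} a^q √q (q+1) ≤ 4a/(1 − a)^{5/2}. -/

import Mathlib

open Finset

lemma aux_choose2 (i : ℕ) : (((i+2).choose 2 : ℕ) : ℝ) * 2 = ((i:ℝ)+1)*((i:ℝ)+2) := by
  have h : (i+2).choose 2 * 2 = (i+1)*(i+2) := by
    have h1 : i + 2 - 1 = i + 1 := by omega
    have he : 2 ∣ (i+2) * (i+1) := by
      have := (Nat.even_mul_succ_self (i+1)).two_dvd
      rwa [Nat.mul_comm] at this
    rw [Nat.choose_two_right, h1, Nat.div_mul_cancel he, Nat.mul_comm]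
  exact_mod_cast congrArg (Nat.cast : ℕ → ℝ) h

lemma aux_sum1 {a : ℝ} (ha0 : 0 < a) (ha1 : a < 1) (n : ℕ) :
    ∑ i ∈ range n, ((i:ℝ)+1) * a^i ≤ 1/(1-a)^2 := by
  have hnorm : ‖a‖ < 1 := by rw [Real.norm_eq_abs, abs_of_pos ha0]; exact ha1
  have hs : HasSum (fun i : ℕ => ((i:ℝ)+1) * a^i) (1/(1-a)^2) := by
    have h := hasSum_choose_mul_geometric_of_norm_lt_one (𝕜 := ℝ) 1 hnorm
    convert h using 2 with i
    · rfl
    simp [Nat.choose_one_right]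
  exact sum_le_hasSum _ (fun i _ => by positivity) hs

lemma aux_sum2 {a : ℝ} (ha0 : 0 < a) (ha1 : a < 1) (n : ℕ) :
    ∑ i ∈ range n, ((i:ℝ)+1) * ((i:ℝ)+2) * a^i ≤ 2/(1-a)^3 := by
  have hnorm : ‖a‖ < 1 := by rw [Real.norm_eq_abs, abs_of_pos ha0]; exact ha1
  have h := (hasSum_choose_mul_geometric_of_norm_lt_one (𝕜 := ℝ) 2 hnorm).mul_left 2
  have heq : (fun i : ℕ => 2 * ((((i+2).choose 2 : ℕ):ℝ) * a ^ i))
      = fun i : ℕ => ((i:ℝ)+1)*((i:ℝ)+2)*a^i := by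
    funext i
    calc 2 * ((((i+2).choose 2 : ℕ):ℝ) * a ^ i)
        = ((((i+2).choose 2 : ℕ):ℝ) * 2) * a ^ i := by ring
      _ = ((i:ℝ)+1)*((i:ℝ)+2)*a^i := by rw [aux_choose2 i]
  rw [heq] at h
  have hval : 2 * (1 / (1-a)^(2+1)) = 2/(1-a)^3 := by ring
  rw [hval] at h
  exact sum_le_hasSum _ (fun i _ => by positivity) h

lemma aux_sqrt {x ε : ℝ} (hx : 0 ≤ x) (hε : 0 < ε) : Real.sqrt x ≤ ε * x + 1/(4*ε) := by
  have key : 4*ε*Real.sqrt x ≤ 4*ε^2*x + 1 := by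
    nlinarith [sq_nonneg (2*ε*Real.sqrt x - 1), Real.sq_sqrt hx]
  have h4 : (0:ℝ) < 4*ε := by linarith
  have heq : ε*x + 1/(4*ε) = (4*ε^2*x+1)/(4*ε) := by field_simp
  rw [heq, le_div_iff₀ h4]
  linarith

/-- Sum of a geometric term times roughly a power `3/2`: for `0 < a < 1` and
`Q : ℕ`, `∑_{q=0}^{Q−1} a^q √q (q+1) ≤ 4a/(1−a)^{5/2}`. -/
theorem sum_geom_pow_three_half (a : ℝ) (ha0 : 0 < a) (ha1 : a < 1) (Q : ℕ) :
    ∑ q ∈ Finset.range Q, a ^ q * Real.sqrt q * (q + 1)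
      ≤ 4 * a / (1 - a) ^ ((5 : ℝ) / 2) := by
  have hb : (0:ℝ) < 1 - a := by linarith
  set s := Real.sqrt (1-a) with hsdef
  have hs0 : 0 < s := Real.sqrt_pos.mpr hb
  have hs2 : s^2 = 1 - a := Real.sq_sqrt hb.le
  have hrpow : (1-a) ^ ((5:ℝ)/2) = s^5 := by
    rw [show (5:ℝ)/2 = (1/2) * (5:ℕ) by norm_num, Real.rpow_mul hb.le,
      Real.rpow_natCast, ← Real.sqrt_eq_rpow]
  rw [hrpow]
  have hrhs : 2 * a / s^5 ≤ 4 * a / s^5 := by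
    gcongr
    linarith
  refine le_trans ?_ hrhs
  cases Q with
  | zero => simp; positivity
  | succ n =>
    rw [Finset.sum_range_succ']
    simp only [Nat.cast_zero, Real.sqrt_zero, mul_zero, zero_mul, add_zero]
    push_cast
    have hterm : ∀ i ∈ range n, a ^ (i+1) * Real.sqrt ((i:ℝ)+1) * ((i:ℝ)+1+1)
        ≤ a * ((s/2) * (((i:ℝ)+1)*((i:ℝ)+2)) + (1/s) * ((i:ℝ)+1)) * a^i := by
      intro i _
      have h1 : Real.sqrt ((i:ℝ)+1) ≤ (s/2) * ((i:ℝ)+1) + 1/(4*(s/2)) :=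
        aux_sqrt (by positivity) (by positivity)
      have h2 : Real.sqrt ((i:ℝ)+1) * ((i:ℝ)+2) ≤ (s/2)*(((i:ℝ)+1)*((i:ℝ)+2)) + (1/s)*((i:ℝ)+1) := by
        have hx2 : (0:ℝ) ≤ (i:ℝ)+2 := by positivity
        have h3 := mul_le_mul_of_nonneg_right h1 hx2
        have h4 : 1/(4*(s/2)) * ((i:ℝ)+2) ≤ (1/s)*((i:ℝ)+1) := by
          have hc : 1/(4*(s/2)) = 1/(2*s) := by ring_nf
          rw [hc]
          have hi2 : ((i:ℝ)+2) ≤ 2*((i:ℝ)+1) := by linarith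
          calc 1/(2*s) * ((i:ℝ)+2) ≤ 1/(2*s) * (2*((i:ℝ)+1)) := by
                apply mul_le_mul_of_nonneg_left hi2 (by positivity)
            _ = (1/s)*((i:ℝ)+1) := by field_simp
        nlinarith [h3, h4]
      have hap : (0:ℝ) < a ^ (i+1) := by positivity
      calc a ^ (i+1) * Real.sqrt ((i:ℝ)+1) * ((i:ℝ)+1+1)
          = a^(i+1) * (Real.sqrt ((i:ℝ)+1) * ((i:ℝ)+2)) := by ring
        _ ≤ a^(i+1) * ((s/2)*(((i:ℝ)+1)*((i:ℝ)+2)) + (1/s)*((i:ℝ)+1)) :=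
            mul_le_mul_of_nonneg_left h2 hap.le
        _ = a * ((s/2) * (((i:ℝ)+1)*((i:ℝ)+2)) + (1/s) * ((i:ℝ)+1)) * a^i := by
            rw [pow_succ]; ring
    calc ∑ i ∈ range n, a ^ (i+1) * Real.sqrt ((i:ℝ)+1) * ((i:ℝ)+1+1)
        ≤ ∑ i ∈ range n, a * ((s/2) * (((i:ℝ)+1)*((i:ℝ)+2)) + (1/s) * ((i:ℝ)+1)) * a^i :=
          Finset.sum_le_sum hterm
      _ = a * (s/2) * (∑ i ∈ range n, ((i:ℝ)+1)*((i:ℝ)+2) * a^i)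
            + a * (1/s) * (∑ i ∈ range n, ((i:ℝ)+1) * a^i) := by
          rw [Finset.mul_sum, Finset.mul_sum, ← Finset.sum_add_distrib]
          apply Finset.sum_congr rfl; intro i _; ring
      _ ≤ a * (s/2) * (2/(1-a)^3) + a * (1/s) * (1/(1-a)^2) := by
          gcongr
          · exact aux_sum2 ha0 ha1 n
          · exact aux_sum1 ha0 ha1 n
      _ = 2 * a / s^5 := by
          rw [← hs2]; field_simp; ring
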